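/- Let A_cl be an n×n real matrix, K an m×n real matrix, and let Q, R, P₀, W₀ be real matrices (Q, P₀, W₀ of size n×n, R of size m×m) such that: A_clᵀ P₀ + P₀ A_cl + Q + Kᵀ R K = 0; A_cl W₀ + W₀ A_clᵀ + I_n = 0; W₀ is positive semidefinite; Q − q·I_n is positive semidefinite for some real q > 0; and R − r·I_m is positive semidefinite for some real r > 0. Then the L2 operator norm of K W₀ satisfies ‖K W₀‖ ≤ tr(P₀)/√(q·r). -/

import Mathlib

open Matrix
open scoped Matrix.Norms.L2Operator
open scoped MatrixOrder

lemma psd_trace_nonneg {k : ℕ} {A : Matrix (Fin k) (Fin k) ℝ} (hA : A.PosSemidef) :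
    0 ≤ A.trace := by
  rw [Matrix.trace]
  apply Finset.sum_nonneg
  intro i _
  exact hA.diag_nonneg

lemma psd_trace_mul_nonneg {k : ℕ} {A B : Matrix (Fin k) (Fin k) ℝ}
    (hA : A.PosSemidef) (hB : B.PosSemidef) : 0 ≤ (A * B).trace := by
  have hS := (CFC.sqrt_nonneg A).posSemidef
  have hsq : CFC.sqrt A * CFC.sqrt A = A := by
    have := CFC.sq_sqrt A hA.nonneg
    rwa [pow_two] at this
  have h1 : (A * B).trace = (CFC.sqrt A * B * CFC.sqrt A).trace := by
    conv_lhs => rw [← hsq]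
    rw [Matrix.mul_assoc, Matrix.trace_mul_comm]
  have h2 : (CFC.sqrt A * B * (CFC.sqrt A)ᴴ).PosSemidef := hB.mul_mul_conjTranspose_same (CFC.sqrt A)
  rw [hS.1.eq] at h2
  rw [h1]
  exact psd_trace_nonneg h2

lemma opnorm_le_frobenius {a b : ℕ} (M : Matrix (Fin a) (Fin b) ℝ) :
    ‖M‖ ≤ Real.sqrt (Mᵀ * M).trace := by
  rw [Matrix.l2_opNorm_def]
  refine ContinuousLinearMap.opNorm_le_bound _ (Real.sqrt_nonneg _) fun x => ?_
  simp only [LinearEquiv.trans_apply, LinearMap.coe_toContinuousLinearMap']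
  rw [Matrix.toEuclideanLin_apply]
  -- ‖(WithLp.equiv 2 _).symm (M *ᵥ _)‖ ≤ √tr * ‖x‖
  have hx : ‖x‖ = Real.sqrt (∑ j, (x j) ^ 2) := by
    rw [EuclideanSpace.norm_eq]
    congr 1
    refine Finset.sum_congr rfl fun j _ => ?_
    rw [Real.norm_eq_abs, sq_abs]
  have hn : ‖WithLp.toLp 2 (M *ᵥ WithLp.ofLp x)‖
      = Real.sqrt (∑ i, (M *ᵥ WithLp.ofLp x) i ^ 2) := by
    rw [EuclideanSpace.norm_eq]
    congr 1
    refine Finset.sum_congr rfl fun i _ => ?_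
    rw [Real.norm_eq_abs, sq_abs]
  rw [hn, hx]
  set y : Fin b → ℝ := WithLp.ofLp x with hy
  have htr : (Mᵀ * M).trace = ∑ i, ∑ j, M i j ^ 2 := by
    rw [Matrix.trace]
    rw [Finset.sum_comm]
    refine Finset.sum_congr rfl fun i _ => ?_
    simp [Matrix.diag, Matrix.mul_apply, sq]
  have key : ∑ i, (M *ᵥ y) i ^ 2 ≤ (Mᵀ * M).trace * (∑ j, y j ^ 2) := by
    rw [htr, Finset.sum_mul]
    refine Finset.sum_le_sum fun i _ => ?_
    have cs : (∑ j, M i j * y j) ^ 2 ≤ (∑ j, M i j ^ 2) * (∑ j, y j ^ 2) := by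
      exact Finset.sum_mul_sq_le_sq_mul_sq Finset.univ _ _
    simpa [Matrix.mulVec, dotProduct] using cs
  calc Real.sqrt (∑ i, (M *ᵥ y) i ^ 2)
      ≤ Real.sqrt ((Mᵀ * M).trace * (∑ j, y j ^ 2)) := Real.sqrt_le_sqrt key
    _ = Real.sqrt (Mᵀ * M).trace * Real.sqrt (∑ j, y j ^ 2) := Real.sqrt_mul
        (by rw [htr]; positivity) _

/-- Bound on `K W₀`: `‖K W₀‖ ≤ tr(P₀)/√(q r)` where `q ≤ σ_min(Q)`, `r ≤ σ_min(R)`. -/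
theorem gain_gramian_norm_bound {n m : ℕ}
    (Acl : Matrix (Fin n) (Fin n) ℝ) (K : Matrix (Fin m) (Fin n) ℝ)
    (Q P₀ W₀ : Matrix (Fin n) (Fin n) ℝ) (R : Matrix (Fin m) (Fin m) ℝ)
    (q r : ℝ) (hq : 0 < q) (hr : 0 < r)
    (hP₀ : Aclᵀ * P₀ + P₀ * Acl + Q + Kᵀ * R * K = 0)
    (hW₀ : Acl * W₀ + W₀ * Aclᵀ + 1 = 0)
    (hW₀psd : W₀.PosSemidef)
    (hQq : (Q - q • (1 : Matrix (Fin n) (Fin n) ℝ)).PosSemidef)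
    (hRr : (R - r • (1 : Matrix (Fin m) (Fin m) ℝ)).PosSemidef) :
    ‖K * W₀‖ ≤ P₀.trace / Real.sqrt (q * r) := by
  classical
  have hKW : (K * W₀ * Kᵀ).PosSemidef := by
    have h := hW₀psd.mul_mul_conjTranspose_same K
    rwa [Matrix.conjTranspose_eq_transpose_of_trivial] at h
  -- trace identity
  have e1 : (1 : Matrix (Fin n) (Fin n) ℝ) = -(Acl * W₀) - W₀ * Aclᵀ := by
    have h : Acl * W₀ + W₀ * Aclᵀ = -1 := eq_neg_of_add_eq_zero_left hW₀
    calc (1 : Matrix (Fin n) (Fin n) ℝ) = -(Acl * W₀ + W₀ * Aclᵀ) := by rw [h, neg_neg]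
      _ = -(Acl * W₀) - W₀ * Aclᵀ := by abel
  have e2 : Q + Kᵀ * R * K = -(Aclᵀ * P₀) - P₀ * Acl := by
    have h : (Aclᵀ * P₀ + P₀ * Acl) + (Q + Kᵀ * R * K) = 0 := by
      rw [← add_assoc]; exact hP₀
    have h2 : Aclᵀ * P₀ + P₀ * Acl = -(Q + Kᵀ * R * K) := eq_neg_of_add_eq_zero_left h
    calc Q + Kᵀ * R * K = -(Aclᵀ * P₀ + P₀ * Acl) := by rw [h2, neg_neg]
      _ = -(Aclᵀ * P₀) - P₀ * Acl := by abel
  have tid : P₀.trace = (Q * W₀).trace + (Kᵀ * R * K * W₀).trace := by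
    have lhs : P₀.trace
        = -(P₀ * (Acl * W₀)).trace - (P₀ * (W₀ * Aclᵀ)).trace := by
      conv_lhs => rw [← mul_one P₀, e1]
      rw [Matrix.mul_sub, Matrix.mul_neg, Matrix.trace_sub, Matrix.trace_neg]
    have rhs : (Q * W₀).trace + (Kᵀ * R * K * W₀).trace
        = -((Aclᵀ * P₀) * W₀).trace - (P₀ * Acl * W₀).trace := by
      rw [← Matrix.trace_add, ← Matrix.add_mul, e2, Matrix.sub_mul, Matrix.neg_mul,
        Matrix.trace_sub, Matrix.trace_neg]
    have c1 : (P₀ * (W₀ * Aclᵀ)).trace = ((Aclᵀ * P₀) * W₀).trace := by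
      rw [Matrix.trace_mul_comm, Matrix.trace_mul_comm (Aclᵀ * P₀) W₀, Matrix.mul_assoc]
    have c2 : (P₀ * (Acl * W₀)).trace = (P₀ * Acl * W₀).trace := by
      rw [Matrix.mul_assoc]
    rw [lhs, rhs, c1, c2]; ring
  -- lower bounds on the two traces
  have hQW : q * W₀.trace ≤ (Q * W₀).trace := by
    have h := psd_trace_mul_nonneg hQq hW₀psd
    have e : ((Q - q • 1) * W₀).trace = (Q * W₀).trace - q * W₀.trace := by
      rw [Matrix.sub_mul, Matrix.trace_sub, Matrix.smul_mul, Matrix.one_mul,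
        Matrix.trace_smul, smul_eq_mul]
    rw [e] at h; linarith
  have hRG : r * (K * W₀ * Kᵀ).trace ≤ (Kᵀ * R * K * W₀).trace := by
    have hcyc : (Kᵀ * R * K * W₀).trace = (R * (K * W₀ * Kᵀ)).trace := by
      rw [Matrix.mul_assoc (Kᵀ * R) K W₀, Matrix.mul_assoc Kᵀ R (K * W₀),
        Matrix.trace_mul_comm, Matrix.mul_assoc, Matrix.mul_assoc]
    have h := psd_trace_mul_nonneg hRr hKW
    have e : ((R - r • 1) * (K * W₀ * Kᵀ)).trace
        = (R * (K * W₀ * Kᵀ)).trace - r * (K * W₀ * Kᵀ).trace := by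
      rw [Matrix.sub_mul, Matrix.trace_sub, Matrix.smul_mul, Matrix.one_mul,
        Matrix.trace_smul, smul_eq_mul]
    rw [e] at h; rw [hcyc]; linarith
  have htrW : 0 ≤ W₀.trace := psd_trace_nonneg hW₀psd
  have htrG : 0 ≤ (K * W₀ * Kᵀ).trace := psd_trace_nonneg hKW
  have hPsum : q * W₀.trace + r * (K * W₀ * Kᵀ).trace ≤ P₀.trace := by
    rw [tid]; linarith
  have hP0 : 0 ≤ P₀.trace := by nlinarith
  have hW_le : W₀.trace ≤ P₀.trace / q := by
    rw [le_div_iff₀ hq]; nlinarith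
  have hG_le : (K * W₀ * Kᵀ).trace ≤ P₀.trace / r := by
    rw [le_div_iff₀ hr]; nlinarith
  -- norm bounds via the square root of W₀
  set S := CFC.sqrt W₀ with hSdef
  have hSsymm : Sᵀ = S := by
    rw [← Matrix.conjTranspose_eq_transpose_of_trivial]
    exact (CFC.sqrt_nonneg W₀).posSemidef.1.eq
  have hsq : S * S = W₀ := by
    have := CFC.sq_sqrt W₀ hW₀psd.nonneg
    rwa [pow_two] at this
  have h1 : ‖K * W₀‖ ≤ ‖K * S‖ * ‖S‖ := by
    have : K * W₀ = (K * S) * S := by rw [Matrix.mul_assoc, hsq]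
    rw [this]; exact Matrix.l2_opNorm_mul _ _
  have hS : ‖S‖ ≤ Real.sqrt W₀.trace := by
    have h := opnorm_le_frobenius S
    rwa [hSsymm, hsq] at h
  have hKS : ‖K * S‖ ≤ Real.sqrt (K * W₀ * Kᵀ).trace := by
    have h := opnorm_le_frobenius (K * S)
    have e : ((K * S)ᵀ * (K * S)).trace = (K * W₀ * Kᵀ).trace := by
      rw [Matrix.trace_mul_comm, Matrix.transpose_mul, hSsymm, ← Matrix.mul_assoc,
        Matrix.mul_assoc K S S, hsq]
    rwa [e] at h
  have h2 : ‖K * W₀‖ ≤ Real.sqrt (K * W₀ * Kᵀ).trace * Real.sqrt W₀.trace := by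
    calc ‖K * W₀‖ ≤ ‖K * S‖ * ‖S‖ := h1
      _ ≤ Real.sqrt (K * W₀ * Kᵀ).trace * Real.sqrt W₀.trace :=
        mul_le_mul hKS hS (norm_nonneg _) (Real.sqrt_nonneg _)
  have h3 : Real.sqrt (K * W₀ * Kᵀ).trace * Real.sqrt W₀.trace
      ≤ Real.sqrt (P₀.trace / r) * Real.sqrt (P₀.trace / q) :=
    mul_le_mul (Real.sqrt_le_sqrt hG_le) (Real.sqrt_le_sqrt hW_le)
      (Real.sqrt_nonneg _) (Real.sqrt_nonneg _)
  have h4 : Real.sqrt (P₀.trace / r) * Real.sqrt (P₀.trace / q)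
      = P₀.trace / Real.sqrt (q * r) := by
    rw [← Real.sqrt_mul (by positivity)]
    rw [show P₀.trace / r * (P₀.trace / q) = P₀.trace ^ 2 / (q * r) by field_simp]
    rw [Real.sqrt_div (by positivity), Real.sqrt_sq hP0]
  calc ‖K * W₀‖ ≤ Real.sqrt (K * W₀ * Kᵀ).trace * Real.sqrt W₀.trace := h2
    _ ≤ Real.sqrt (P₀.trace / r) * Real.sqrt (P₀.trace / q) := h3
    _ = P₀.trace / Real.sqrt (q * r) := h4
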